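/- Let C be a category with all small coproducts, let S be a family of morphisms of C, and let F be the class of morphisms of C with the right lifting property with respect to every member of S (the 'fibrations'). Call a morphism of C a trivial cofibration if it has the left lifting property with respect to every member of F. Let J be a small category, and call a morphism φ of the functor category C^J an injective fibration if it has the right lifting property with respect to every morphism of C^J all of whose components are trivial cofibrations. Then every injective fibration φ : X → Y of C^J is a projective fibration, i.e., for every object j of J the component φ_j : X(j) → Y(j) belongs to F. -/

import Mathlib

open CategoryTheory CategoryTheory.Limits

namespace IndexedPaper

universe w t v u

variable {C : Type u} [Category.{v} C]

/-- The fibrations determined by a family `S` of morphisms: the morphisms with the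
right lifting property with respect to every member of `S`. -/
def IsFibS {ι : Type t} {A B : ι → C} (S : ∀ i, A i ⟶ B i) {X Y : C} (p : X ⟶ Y) : Prop :=
  ∀ i, HasLiftingProperty (S i) p

/-- The trivial cofibrations: morphisms with the left lifting property with respect to
every fibration. -/
def IsTrivCofS {ι : Type t} {A B : ι → C} (S : ∀ i, A i ⟶ B i) {X Y : C} (g : X ⟶ Y) : Prop :=
  ∀ ⦃W Z : C⦄ (p : W ⟶ Z), IsFibS S p → HasLiftingProperty g p

/-- A coproduct of morphisms having the left lifting property with respect to `p`
also has the left lifting property with respect to `p`. -/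
lemma sigmaMap_hasLiftingProperty {σ : Type w} [HasCoproducts.{w} C]
    {A B : σ → C} (f : ∀ s, A s ⟶ B s) {W Z : C} (p : W ⟶ Z)
    (h : ∀ s, HasLiftingProperty (f s) p) : HasLiftingProperty (Limits.Sigma.map f) p := by
  constructor
  intro u v sq
  have sq' : ∀ s, CommSq (Sigma.ι A s ≫ u) (f s) p (Sigma.ι B s ≫ v) := by
    intro s
    constructor
    rw [Category.assoc, sq.w, ← Category.assoc, ← Category.assoc, Sigma.ι_map]
  exact ⟨⟨{ l := Sigma.desc fun s => ((h s).sq_hasLift (sq' s)).exists_lift.some.l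
            fac_left := by
              apply Sigma.hom_ext
              intro s
              rw [← Category.assoc, Sigma.ι_map]
              have := ((h s).sq_hasLift (sq' s)).exists_lift.some.fac_left
              simpa using this
            fac_right := by
              apply Sigma.hom_ext
              intro s
              have := ((h s).sq_hasLift (sq' s)).exists_lift.some.fac_right
              simpa using this }⟩⟩

/-- In a category with all small coproducts, every injective fibration
of a functor category is a projective fibration. -/
theorem injective_fibration_is_projective_fibration [HasCoproducts.{w} C]
    {ι : Type t} {A B : ι → C} (S : ∀ i, A i ⟶ B i)
    {J : Type w} [SmallCategory J] {X Y : J ⥤ C} (φ : X ⟶ Y)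
    (hφ : ∀ ⦃F G : J ⥤ C⦄ (i : F ⟶ G), (∀ j : J, IsTrivCofS S (i.app j)) →
      HasLiftingProperty i φ)
    (j : J) : IsFibS S (φ.app j) := by
  intro i
  have main : HasLiftingProperty ((evaluationLeftAdjoint C j).map (S i)) φ := by
    apply hφ
    intro k W Z p hp
    have : ((evaluationLeftAdjoint C j).map (S i)).app k =
        Limits.Sigma.map (fun _ : j ⟶ k => S i) := by
      apply Limits.Sigma.hom_ext
      intro h
      simp [evaluationLeftAdjoint]
    rw [this]
    exact sigmaMap_hasLiftingProperty _ p (fun _ => hp i)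
  exact ((evaluationAdjunctionRight C j).hasLiftingProperty_iff (S i) φ).mp main

end IndexedPaper
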